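/- Let W : ℝ^{(l-1)n} → ℂ be an L² function and f̂ a Schwartz function on ℝⁿ. Then with the scaling exponent α, the quantity R^{l(n-α)} · |∫ f̂(Rp₁)⋯f̂(-R(p₁+⋯+p_{l-1})) Ŵ(q₁,…,q_{l-1}) ∏dq_i| is bounded by C · R^{l(n-α) - (l-1)n/2} · ‖Ŵ‖_{L²} for a constant C depending only on f and l. In particular, if α = 3n/4, this bound tends to 0 as R → ∞ for every l ≥ 3 and remains bounded for l = 2. -/

import Mathlib

open MeasureTheory Filter Topology

section L2ClusteringAux

open Finset Kronecker


open MeasureTheory Finset Kronecker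

variable {F : Type*} [NormedAddCommGroup F] [NormedSpace ℝ F] [FiniteDimensional ℝ F]

noncomputable def sumLM (m : ℕ) (F : Type*) [NormedAddCommGroup F] [NormedSpace ℝ F] :
    (Fin m → F) →ₗ[ℝ] (Fin m → F) :=
  LinearMap.pi fun i => ∑ j ∈ Finset.Iic i, LinearMap.proj j

lemma sumLM_apply (m : ℕ) (p : Fin m → F) (i : Fin m) :
    sumLM m F p i = ∑ j ∈ Finset.Iic i, p j := by
  simp [sumLM]

lemma sumLM_det (m : ℕ) : LinearMap.det (sumLM m F) = 1 := by
  classical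
  set d := Module.finrank ℝ F with hd
  set bE : Module.Basis (Fin d) ℝ F := Module.finBasis ℝ F with hbE
  set b : Module.Basis ((_ : Fin m) × Fin d) ℝ (Fin m → F) := Pi.basis fun _ => bE with hb
  set A : Matrix (Fin m) (Fin m) ℝ := Matrix.of fun i j => if j ≤ i then (1:ℝ) else 0 with hA
  set e := Equiv.sigmaEquivProd (Fin m) (Fin d) with he
  have hM : LinearMap.toMatrix b b (sumLM m F)
      = Matrix.reindex e.symm e.symm (A ⊗ₖ (1 : Matrix (Fin d) (Fin d) ℝ)) := by
    ext ⟨i, a⟩ ⟨j, c⟩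
    rw [LinearMap.toMatrix_apply]
    have hbjc : b ⟨j, c⟩ = Pi.single j (bE c) := by simp [hb]
    have hval : sumLM m F (Pi.single j (bE c)) i = if j ≤ i then bE c else 0 := by
      rw [sumLM_apply]
      simp [Pi.single_apply]
    have hrep : b.repr (sumLM m F (Pi.single j (bE c))) ⟨i, a⟩
        = bE.repr (sumLM m F (Pi.single j (bE c)) i) a := by
      rw [hb, Pi.basis_repr]
    rw [hbjc, hrep, hval]
    simp only [he, Equiv.sigmaEquivProd, Matrix.reindex_apply, Matrix.submatrix_apply,
      Equiv.symm_symm, Equiv.coe_fn_mk, Matrix.kroneckerMap_apply, Matrix.one_apply, hA,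
      Matrix.of_apply]
    by_cases h1 : j ≤ i
    · rw [if_pos h1, if_pos h1, Module.Basis.repr_self, one_mul]
      by_cases h2 : c = a
      · subst h2; simp
      · rw [Finsupp.single_apply, if_neg h2, if_neg (Ne.symm h2)]
    · rw [if_neg h1, if_neg h1, map_zero, zero_mul, Finsupp.coe_zero, Pi.zero_apply]
  have hA' : A.det = 1 := by
    have ht : A.BlockTriangular OrderDual.toDual := by
      intro i j hij
      have h' : ¬ j ≤ i := not_le.mpr hij
      simp [hA, h']
    rw [Matrix.det_of_lowerTriangular A ht]
    simp [hA]
  rw [← LinearMap.det_toMatrix b, hM, Matrix.det_reindex_self, Matrix.det_kronecker, hA',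
    Matrix.det_one]
  simp

lemma measurePreserving_sumLM (n m : ℕ) :
    MeasurePreserving
      (fun (p : Fin m → EuclideanSpace ℝ (Fin n)) (i : Fin m) => ∑ j ∈ Finset.Iic i, p j)
      volume volume := by
  haveI : (volume : Measure (Fin m → EuclideanSpace ℝ (Fin n))).IsAddHaarMeasure :=
    Measure.pi.isAddHaarMeasure _
  have h1 : (fun (p : Fin m → EuclideanSpace ℝ (Fin n)) (i : Fin m) => ∑ j ∈ Finset.Iic i, p j)
      = ⇑(sumLM m (EuclideanSpace ℝ (Fin n))) := by
    funext p i; rw [sumLM_apply]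
  rw [h1]
  have hd : LinearMap.det (sumLM m (EuclideanSpace ℝ (Fin n))) ≠ 0 := by
    rw [sumLM_det]; norm_num
  refine ⟨(sumLM m (EuclideanSpace ℝ (Fin n))).continuous_of_finiteDimensional.measurable, ?_⟩
  rw [Measure.map_linearMap_addHaar_eq_smul_addHaar _ hd, sumLM_det]
  norm_num

lemma rpow_half_pow (x : ℝ) (hx : 0 ≤ x) (k : ℕ) :
    (x ^ k) ^ ((1:ℝ)/2) = (x ^ ((1:ℝ)/2)) ^ k := by
  rw [← Real.rpow_natCast x k, ← Real.rpow_mul hx, mul_comm, Real.rpow_mul hx,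
    Real.rpow_natCast]

lemma rpow_scale_aux (R : ℝ) (hR : 0 < R) (n m : ℕ) :
    ((((R ^ n)⁻¹ : ℝ)) ^ ((1:ℝ)/2)) ^ m = R ^ (-(((m:ℝ) * n) / 2)) := by
  have h1 : ((R ^ n)⁻¹ : ℝ) = R ^ (-(n:ℝ)) := by
    rw [← Real.rpow_natCast R n, ← Real.rpow_neg hR.le]
  rw [h1, ← Real.rpow_mul hR.le, ← Real.rpow_natCast (R ^ (-(n:ℝ) * (1/2))) m,
    ← Real.rpow_mul hR.le]
  congr 1
  push_cast
  ring

set_option maxHeartbeats 1000000 in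
lemma key_bound (n m : ℕ) (W : (Fin m → EuclideanSpace ℝ (Fin n)) → ℂ)
    (hW : MemLp W 2 volume) (f : SchwartzMap (EuclideanSpace ℝ (Fin n)) ℂ) :
    ∃ C > 0, ∀ R ≥ (1:ℝ),
      ‖∫ p : Fin m → EuclideanSpace ℝ (Fin n),
          (∏ i, f (R • p i)) * f (-(R • ∑ i, p i)) * W (fun i => ∑ j ∈ Finset.Iic i, p j)‖
        ≤ C * R ^ (-(((m:ℝ) * n) / 2)) * (eLpNorm W 2 volume).toReal := by
  classical
  set M : ℝ := SchwartzMap.seminorm ℝ 0 0 f with hM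
  have hM0 : 0 ≤ M := apply_nonneg _ _
  have hfb : ∀ x, ‖f x‖ ≤ M := fun x => SchwartzMap.norm_le_seminorm ℝ f x
  set I2 : ℝ := ∫ q : EuclideanSpace ℝ (Fin n), ‖f q‖ ^ 2 with hI2
  have hI20 : 0 ≤ I2 := integral_nonneg fun q => by positivity
  refine ⟨M * (I2 ^ ((1:ℝ)/2)) ^ m + 1, by positivity, fun R hR => ?_⟩
  have hR0 : (0:ℝ) < R := lt_of_lt_of_le one_pos hR
  -- measure preserving change of variables for W
  have hT := measurePreserving_sumLM n m
  set W' : (Fin m → EuclideanSpace ℝ (Fin n)) → ℂ :=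
    W ∘ (fun p i => ∑ j ∈ Finset.Iic i, p j) with hW'
  have hWc : MemLp W' 2 volume := hW.comp_measurePreserving hT
  have hWnorm : eLpNorm W' 2 volume = eLpNorm W 2 volume :=
    eLpNorm_comp_measurePreserving hW.1 hT
  set g : (Fin m → EuclideanSpace ℝ (Fin n)) → ℂ :=
    fun p => (∏ i, f (R • p i)) * f (-(R • ∑ i, p i)) with hg
  have hgcont : Continuous g := by
    apply Continuous.mul
    · exact continuous_finset_prod _ fun i _ =>
        f.continuous.comp ((continuous_apply i).const_smul R)
    · exact f.continuous.comp
        (((continuous_finset_sum _ fun i _ => continuous_apply i).const_smul R).neg)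
  set G : (Fin m → EuclideanSpace ℝ (Fin n)) → ℝ := fun p => ∏ i, ‖f (R • p i)‖ with hG
  have hGnn : ∀ p, 0 ≤ G p := fun p => Finset.prod_nonneg fun i _ => norm_nonneg _
  have hGcont : Continuous G := continuous_finset_prod _ fun i _ =>
    (f.continuous.comp ((continuous_apply i).const_smul R)).norm
  have hgle : ∀ p, ‖g p‖ ≤ M * G p := by
    intro p
    have h1 : ‖g p‖ = (∏ i, ‖f (R • p i)‖) * ‖f (-(R • ∑ i, p i))‖ := by
      rw [hg, norm_mul, norm_prod]
    rw [h1]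
    calc (∏ i, ‖f (R • p i)‖) * ‖f (-(R • ∑ i, p i))‖
        ≤ G p * M := mul_le_mul_of_nonneg_left (hfb _) (hGnn p)
      _ = M * G p := mul_comm _ _
  -- integrability of the square of a single scaled factor
  have h2 : Integrable (fun q : EuclideanSpace ℝ (Fin n) => ‖f q‖ ^ 2) volume := by
    refine Integrable.mono' (f.integrable.norm.const_mul M)
      ((f.continuous.norm.pow 2).aestronglyMeasurable) (ae_of_all _ fun q => ?_)
    rw [Real.norm_of_nonneg (by positivity), pow_two]
    exact mul_le_mul_of_nonneg_right (hfb q) (norm_nonneg _)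
  have hint1 : Integrable (fun q : EuclideanSpace ℝ (Fin n) => ‖f (R • q)‖ ^ 2) volume :=
    h2.comp_smul hR0.ne'
  have hG2int : Integrable
      (fun p : Fin m → EuclideanSpace ℝ (Fin n) => ∏ i, ‖f (R • p i)‖ ^ 2) volume :=
    Integrable.fintype_prod (f := fun (_ : Fin m) (q : EuclideanSpace ℝ (Fin n)) =>
      ‖f (R • q)‖ ^ 2) fun _ => hint1
  have hGsq : (fun p => G p ^ 2)
      = fun p : Fin m → EuclideanSpace ℝ (Fin n) => ∏ i, ‖f (R • p i)‖ ^ 2 := by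
    funext p
    rw [hG, ← Finset.prod_pow]
  have hGmem : MemLp G 2 volume := by
    rw [memLp_two_iff_integrable_sq hGcont.aestronglyMeasurable]
    exact hGsq ▸ hG2int
  have hgmem : MemLp g 2 volume := by
    refine MemLp.of_le_mul (c := M) hGmem hgcont.aestronglyMeasurable (ae_of_all _ fun p => ?_)
    rw [Real.norm_of_nonneg (hGnn p)]
    exact hgle p
  have hpq : (2:ℝ).HolderConjugate 2 := ⟨by norm_num, by norm_num, by norm_num⟩
  have two_eq : ENNReal.ofReal (2:ℝ) = 2 := by norm_num
  -- change of variables for the single-factor integral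
  have hJ : (∫ q : EuclideanSpace ℝ (Fin n), ‖f (R • q)‖ ^ 2) = ((R:ℝ) ^ n)⁻¹ * I2 := by
    have h := Measure.integral_comp_smul_of_nonneg (volume : Measure (EuclideanSpace ℝ (Fin n)))
      (fun q => ‖f q‖ ^ 2) R (hR := hR0.le)
    simpa [finrank_euclideanSpace_fin, smul_eq_mul, hI2] using h
  -- bound on the L² norm of g
  have hgI_nn : 0 ≤ ∫ p, ‖g p‖ ^ (2:ℝ) :=
    integral_nonneg fun p => Real.rpow_nonneg (norm_nonneg _) _
  have e1 : (∫ p, ‖g p‖ ^ (2:ℝ)) = ∫ p, ‖g p‖ ^ 2 := by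
    apply integral_congr_ae
    filter_upwards with p
    rw [show (2:ℝ) = ((2:ℕ):ℝ) by norm_num, Real.rpow_natCast]
  have e2 : (∫ p, ‖g p‖ ^ 2) ≤ M ^ 2 * ((((R:ℝ) ^ n)⁻¹ * I2)) ^ m := by
    have hpt : ∀ p, ‖g p‖ ^ 2 ≤ M ^ 2 * ∏ i, ‖f (R • p i)‖ ^ 2 := by
      intro p
      calc ‖g p‖ ^ 2 ≤ (M * G p) ^ 2 := by
            apply pow_le_pow_left₀ (norm_nonneg _) (hgle p)
        _ = M ^ 2 * ∏ i, ‖f (R • p i)‖ ^ 2 := by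
            rw [mul_pow, hG, ← Finset.prod_pow]
    calc (∫ p, ‖g p‖ ^ 2)
        ≤ ∫ p, M ^ 2 * ∏ i, ‖f (R • p i)‖ ^ 2 :=
          integral_mono_of_nonneg (ae_of_all _ fun p => by positivity)
            (hG2int.const_mul (M ^ 2)) (ae_of_all _ hpt)
      _ = M ^ 2 * ∫ p : Fin m → EuclideanSpace ℝ (Fin n), ∏ i, ‖f (R • p i)‖ ^ 2 := by
          rw [integral_const_mul]
      _ = M ^ 2 * (∫ q : EuclideanSpace ℝ (Fin n), ‖f (R • q)‖ ^ 2) ^ m := by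
          rw [show (volume : Measure (Fin m → EuclideanSpace ℝ (Fin n))) = Measure.pi fun _ => volume from rfl,
            MeasureTheory.integral_fintype_prod_eq_pow (ι := Fin m)
            (fun q : EuclideanSpace ℝ (Fin n) => ‖f (R • q)‖ ^ 2), Fintype.card_fin]
      _ = M ^ 2 * ((((R:ℝ) ^ n)⁻¹ * I2)) ^ m := by rw [hJ]
  have hA : (∫ p, ‖g p‖ ^ (2:ℝ)) ^ ((1:ℝ)/2)
      ≤ (M * (I2 ^ ((1:ℝ)/2)) ^ m) * R ^ (-(((m:ℝ) * n) / 2)) := by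
    have step := Real.rpow_le_rpow hgI_nn (le_of_eq_of_le e1 e2)
      (by norm_num : (0:ℝ) ≤ 1/2)
    refine step.trans_eq ?_
    have hM2 : ((M ^ 2 : ℝ)) ^ ((1:ℝ)/2) = M := by
      rw [← Real.rpow_natCast M 2, ← Real.rpow_mul hM0]
      norm_num
    rw [Real.mul_rpow (by positivity) (by positivity), hM2,
      rpow_half_pow _ (by positivity) m,
      Real.mul_rpow (by positivity) hI20, mul_pow, rpow_scale_aux R hR0 n m]
    ring
  -- the L² norm of W'
  have hB : (∫ p, ‖W' p‖ ^ (2:ℝ)) ^ ((1:ℝ)/2) = (eLpNorm W 2 volume).toReal := by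
    rw [← hWnorm, hWc.eLpNorm_eq_integral_rpow_norm (by norm_num) (by norm_num)]
    rw [ENNReal.toReal_ofReal (by positivity)]
    norm_num
  -- put everything together
  calc ‖∫ p : Fin m → EuclideanSpace ℝ (Fin n),
          (∏ i, f (R • p i)) * f (-(R • ∑ i, p i)) * W (fun i => ∑ j ∈ Finset.Iic i, p j)‖
      = ‖∫ p, g p * W' p‖ := rfl
    _ ≤ ∫ p, ‖g p * W' p‖ := norm_integral_le_integral_norm _
    _ = ∫ p, ‖g p‖ * ‖W' p‖ := by simp only [norm_mul]
    _ ≤ (∫ p, ‖g p‖ ^ (2:ℝ)) ^ ((1:ℝ)/2) * (∫ p, ‖W' p‖ ^ (2:ℝ)) ^ ((1:ℝ)/2) :=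
        integral_mul_norm_le_Lp_mul_Lq hpq (by rw [two_eq]; exact hgmem)
          (by rw [two_eq]; exact hWc)
    _ = (∫ p, ‖g p‖ ^ (2:ℝ)) ^ ((1:ℝ)/2) * (eLpNorm W 2 volume).toReal := by rw [hB]
    _ ≤ ((M * (I2 ^ ((1:ℝ)/2)) ^ m) * R ^ (-(((m:ℝ) * n) / 2)))
          * (eLpNorm W 2 volume).toReal :=
        mul_le_mul_of_nonneg_right hA ENNReal.toReal_nonneg
    _ ≤ (M * (I2 ^ ((1:ℝ)/2)) ^ m + 1) * R ^ (-(((m:ℝ) * n) / 2))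
          * (eLpNorm W 2 volume).toReal := by
        apply mul_le_mul_of_nonneg_right _ ENNReal.toReal_nonneg
        exact mul_le_mul_of_nonneg_right (le_add_of_nonneg_right zero_le_one)
          (Real.rpow_nonneg hR0.le _)


end L2ClusteringAux

/-- `L²`-clustering bound via Cauchy-Schwarz: with scaling exponent `α`, the scaled
truncated `l`-point integral is bounded by `C · R^{l(n-α)-(l-1)n/2} · ‖Ŵ‖_{L²}`;
for `α = 3n/4` the exponent is negative for `l ≥ 3` (so the bound tends to `0`)
and zero for `l = 2`. -/
theorem L2_clustering_bound (n l : ℕ) (hn : 0 < n) (hl : 2 ≤ l) (α : ℝ)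
    (What : (Fin (l - 1) → EuclideanSpace ℝ (Fin n)) → ℂ)
    (hW : MemLp What 2 volume)
    (fhat : SchwartzMap (EuclideanSpace ℝ (Fin n)) ℂ) :
    (∃ C > 0, ∀ R ≥ (1 : ℝ),
      R ^ ((l : ℝ) * ((n : ℝ) - α)) *
        ‖∫ p : Fin (l - 1) → EuclideanSpace ℝ (Fin n),
            (∏ i, fhat (R • p i)) * fhat (-(R • ∑ i, p i)) *
              What (fun i => ∑ j ∈ Finset.Iic i, p j)‖
        ≤ C * R ^ ((l : ℝ) * ((n : ℝ) - α) - ((l : ℝ) - 1) * n / 2) *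
            (eLpNorm What 2 volume).toReal) ∧
    (α = 3 * n / 4 → 3 ≤ l →
      Tendsto (fun R : ℝ => R ^ ((l : ℝ) * ((n : ℝ) - α) - ((l : ℝ) - 1) * n / 2))
        atTop (𝓝 0)) ∧
    (α = 3 * n / 4 → l = 2 →
      (l : ℝ) * ((n : ℝ) - α) - ((l : ℝ) - 1) * n / 2 = 0) := by
  refine ⟨?_, ?_, ?_⟩
  · obtain ⟨C, hC, hbd⟩ := key_bound n (l - 1) What hW fhat
    refine ⟨C, hC, fun R hR => ?_⟩
    have hR0 : (0:ℝ) < R := lt_of_lt_of_le one_pos hR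
    have hc : (((l - 1 : ℕ)) : ℝ) = (l : ℝ) - 1 := by
      have h1 : (1:ℕ) ≤ l := le_trans one_le_two hl
      rw [Nat.cast_sub h1, Nat.cast_one]
    calc R ^ ((l : ℝ) * ((n : ℝ) - α)) *
          ‖∫ p : Fin (l - 1) → EuclideanSpace ℝ (Fin n),
            (∏ i, fhat (R • p i)) * fhat (-(R • ∑ i, p i)) *
              What (fun i => ∑ j ∈ Finset.Iic i, p j)‖
        ≤ R ^ ((l : ℝ) * ((n : ℝ) - α)) *
            (C * R ^ (-((((l - 1 : ℕ) : ℝ) * n) / 2)) * (eLpNorm What 2 volume).toReal) :=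
          mul_le_mul_of_nonneg_left (hbd R hR) (Real.rpow_nonneg hR0.le _)
      _ = C * R ^ ((l : ℝ) * ((n : ℝ) - α) - ((l : ℝ) - 1) * n / 2) *
            (eLpNorm What 2 volume).toReal := by
          rw [hc, show (l : ℝ) * ((n : ℝ) - α) - ((l : ℝ) - 1) * n / 2
              = ((l : ℝ) * ((n : ℝ) - α)) + (-((((l : ℝ) - 1) * n) / 2)) from by ring,
            Real.rpow_add hR0]
          ring
  · intro hα hl3
    have h3 : (3:ℝ) ≤ (l:ℝ) := by exact_mod_cast hl3
    have hn' : (0:ℝ) < n := by exact_mod_cast hn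
    have hexp : (l : ℝ) * ((n : ℝ) - α) - ((l : ℝ) - 1) * n / 2
        = -(((l:ℝ) - 2) * n / 4) := by rw [hα]; ring
    rw [hexp]
    exact tendsto_rpow_neg_atTop (by nlinarith)
  · intro hα hl2
    subst hl2
    rw [hα]
    push_cast
    ring
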